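/- arXiv:1411.2166 — 2 statements merged into one kernel-verified Lean document; each statement's English description precedes it below -/
import Mathlib

section
/- Let T_0, T_1, ..., T_k be independent random variables with T_i exponentially distributed with rate m + i, where m ≥ 1 is an integer. Then for every λ > 0 and s > 0, P(∑_{i=0}^k T_i ≤ s) ≤ exp(λ(s − ln((m + k + 1 + λ)/(m + 1 + λ)))). -/
open MeasureTheory ProbabilityTheory Real

lemma aux_lintegral_exp (r lam : ℝ) (hr : 0 < r) (hlam : 0 < lam) :
    ∫⁻ x, ENNReal.ofReal (exp (-lam * x)) ∂(expMeasure r)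
      = ENNReal.ofReal (r / (r + lam)) := by
  have hrl : 0 < r + lam := by linarith
  have hmeas : Measurable fun x : ℝ => ENNReal.ofReal (exp (-lam * x)) :=
    (measurable_id.const_mul (-lam)).exp.ennreal_ofReal
  have hpdf : Measurable fun x => exponentialPDF r x :=
    (measurable_exponentialPDFReal r).ennreal_ofReal
  have hexp : expMeasure r = volume.withDensity (fun x => exponentialPDF r x) := rfl
  rw [hexp, lintegral_withDensity_eq_lintegral_mul _ hpdf hmeas]
  rw [← lintegral_add_compl (μ := volume) _ (measurableSet_Iio (a := (0:ℝ)))]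
  have h1 : ∫⁻ x in Set.Iio (0:ℝ), ((fun x => exponentialPDF r x) * fun x =>
      ENNReal.ofReal (exp (-lam * x))) x = 0 := by
    rw [setLIntegral_congr_fun (g := fun _ => 0) measurableSet_Iio
      (fun x (hx : x < 0) => by
        simp [exponentialPDF_of_neg hx]), lintegral_zero]
  have h2 : ∫⁻ x in (Set.Iio (0:ℝ))ᶜ, ((fun x => exponentialPDF r x) * fun x =>
      ENNReal.ofReal (exp (-lam * x))) x
      = ∫⁻ x in Set.Ici (0:ℝ), ENNReal.ofReal (r * exp (-((r + lam) * x))) := by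
    rw [Set.compl_Iio]
    refine setLIntegral_congr_fun measurableSet_Ici (fun x (hx : 0 ≤ x) => ?_)
    rw [Pi.mul_apply, exponentialPDF_of_nonneg hx, ← ENNReal.ofReal_mul (by positivity)]
    congr 1
    rw [mul_assoc, ← Real.exp_add]
    ring_nf
  rw [h1, h2, zero_add]
  have hint : IntegrableOn (fun x => r * exp (-((r + lam) * x))) (Set.Ici (0:ℝ)) := by
    rw [integrableOn_Ici_iff_integrableOn_Ioi]
    have h := (exp_neg_integrableOn_Ioi 0 hrl).const_mul r
    simp only [neg_mul] at h
    exact h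
  rw [← ofReal_integral_eq_lintegral_ofReal hint
    (ae_of_all _ (fun x => by positivity))]
  congr 1
  rw [integral_Ici_eq_integral_Ioi, MeasureTheory.integral_const_mul]
  have := integral_comp_mul_left_Ioi (fun y => exp (-y)) 0 hrl
  simp only [mul_zero, smul_eq_mul] at this
  rw [show (fun x => exp (-((r+lam)*x))) = fun x => exp (-((r+lam)*x)) from rfl]
  calc r * ∫ x in Set.Ioi (0:ℝ), exp (-((r + lam) * x))
      = r * ((r+lam)⁻¹ * ∫ x in Set.Ioi (0:ℝ), exp (-x)) := by rw [← this]
    _ = r / (r + lam) := by rw [integral_exp_neg_Ioi_zero]; field_simp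

lemma aux_integrable_exp (r lam : ℝ) (hr : 0 < r) (hlam : 0 < lam) :
    Integrable (fun x => exp (-lam * x)) (expMeasure r) := by
  have hrl : 0 < r + lam := by linarith
  refine ⟨(measurable_id.const_mul (-lam)).exp.aestronglyMeasurable, ?_⟩
  rw [hasFiniteIntegral_iff_ofReal (ae_of_all _ (fun x => (exp_pos _).le))]
  rw [aux_lintegral_exp r lam hr hlam]
  exact ENNReal.ofReal_lt_top

lemma aux_integral_exp (r lam : ℝ) (hr : 0 < r) (hlam : 0 < lam) :
    ∫ x, exp (-lam * x) ∂(expMeasure r) = r / (r + lam) := by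
  have hm : Measurable fun x : ℝ => exp (-lam * x) := by fun_prop
  rw [integral_eq_lintegral_of_nonneg_ae (ae_of_all _ (fun x => (exp_pos _).le))
    hm.aestronglyMeasurable,
    aux_lintegral_exp r lam hr hlam, ENNReal.toReal_ofReal (by positivity)]

lemma aux_sum_log (m : ℕ) (lam : ℝ) (hm : 1 ≤ m) (hlam : 0 < lam) : ∀ k : ℕ,
    Real.log (((m:ℝ) + k + 1 + lam) / ((m:ℝ) + 1 + lam))
      ≤ ∑ i ∈ Finset.range (k+1), 1/((m:ℝ)+i+lam) := by
  have hm1 : (1:ℝ) ≤ m := by exact_mod_cast hm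
  intro k
  induction k with
  | zero =>
      have : ((m:ℝ) + 0 + 1 + lam) / ((m:ℝ) + 1 + lam) = 1 := by
        rw [add_zero]; field_simp
      rw [Nat.cast_zero, this, Real.log_one]
      apply Finset.sum_nonneg
      intro i _
      positivity
  | succ k ih =>
      have hk : (0:ℝ) < (m:ℝ) + k + 1 + lam := by positivity
      have hk2 : (0:ℝ) < (m:ℝ) + (k+1:ℕ) + 1 + lam := by positivity
      have hb : (0:ℝ) < (m:ℝ) + 1 + lam := by positivity
      have hsplit : ((m:ℝ) + (k+1:ℕ) + 1 + lam) / ((m:ℝ) + 1 + lam)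
          = (((m:ℝ) + (k+1:ℕ) + 1 + lam) / ((m:ℝ) + k + 1 + lam))
            * (((m:ℝ) + k + 1 + lam) / ((m:ℝ) + 1 + lam)) := by
        field_simp
      rw [hsplit, Real.log_mul (by positivity) (by positivity)]
      rw [Finset.sum_range_succ]
      have h1 : Real.log (((m:ℝ) + (k+1:ℕ) + 1 + lam) / ((m:ℝ) + k + 1 + lam))
          ≤ 1/((m:ℝ) + (k+1:ℕ) + lam) := by
        have := Real.log_le_sub_one_of_pos (show (0:ℝ) <
          ((m:ℝ) + (k+1:ℕ) + 1 + lam) / ((m:ℝ) + k + 1 + lam) by positivity)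
        refine this.trans (le_of_eq ?_)
        push_cast
        field_simp
        ring
      linarith

/-- Chernoff-type bound for the sum of independent exponentials with rates m, m+1, ..., m+k. -/
theorem stmt_2 {Ω : Type*} [MeasurableSpace Ω] (μ : Measure Ω) [IsProbabilityMeasure μ]
    (m k : ℕ) (hm : 1 ≤ m) (T : Fin (k + 1) → Ω → ℝ)
    (hmeas : ∀ i, Measurable (T i))
    (hindep : iIndepFun T μ)
    (hlaw : ∀ i : Fin (k + 1), μ.map (T i) = expMeasure ((m : ℝ) + i))
    (lam s : ℝ) (hlam : 0 < lam) (hs : 0 < s) :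
    (μ {ω | ∑ i, T i ω ≤ s}).toReal
      ≤ exp (lam * (s - log (((m : ℝ) + k + 1 + lam) / ((m : ℝ) + 1 + lam)))) := by
  have hm1 : (1:ℝ) ≤ m := by exact_mod_cast hm
  have hri : ∀ i : Fin (k+1), (0:ℝ) < (m:ℝ) + i := fun i => by positivity
  have hg : Measurable fun x : ℝ => exp (-lam * x) := by fun_prop
  have hmgf : ∀ i : Fin (k+1), mgf (T i) μ (-lam) = ((m:ℝ)+i) / (((m:ℝ)+i) + lam) := by
    intro i
    have h1 : ∫ ω, exp (-lam * T i ω) ∂μ = ∫ x, exp (-lam * x) ∂(μ.map (T i)) :=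
      (integral_map (hmeas i).aemeasurable hg.aestronglyMeasurable).symm
    rw [mgf, show (μ[fun ω => exp (-lam * T i ω)]) = ∫ ω, exp (-lam * T i ω) ∂μ from rfl,
      h1, hlaw i, aux_integral_exp _ _ (hri i) hlam]
  have hint : ∀ i ∈ Finset.univ, Integrable (fun ω => exp (-lam * T i ω)) μ := by
    intro i _
    have h2 := aux_integrable_exp ((m:ℝ)+i) lam (hri i) hlam
    rw [← hlaw i] at h2
    exact (integrable_map_measure hg.aestronglyMeasurable (hmeas i).aemeasurable).mp h2
  have hintS : Integrable (fun ω => exp (-lam * (∑ i, T i) ω)) μ :=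
    hindep.integrable_exp_mul_sum hmeas hint
  have hch := measure_le_le_exp_mul_mgf (μ := μ) (X := ∑ i, T i) s
    (by linarith : -lam ≤ 0) hintS
  simp only [Finset.sum_apply] at hch
  rw [hindep.mgf_sum hmeas Finset.univ] at hch
  set R := ((m:ℝ) + k + 1 + lam) / ((m:ℝ) + 1 + lam) with hR
  have hlogR : log R ≤ ∑ i ∈ Finset.range (k+1), 1/((m:ℝ)+i+lam) :=
    aux_sum_log m lam hm hlam k
  have hprod : ∏ i : Fin (k+1), mgf (T i) μ (-lam) ≤ exp (-(lam * log R)) := by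
    calc ∏ i : Fin (k+1), mgf (T i) μ (-lam)
        ≤ ∏ i : Fin (k+1), exp (-(lam / (((m:ℝ)+i)+lam))) := by
          apply Finset.prod_le_prod
          · intro i _; rw [hmgf i]; positivity
          · intro i _
            rw [hmgf i]
            have hpos : (0:ℝ) < ((m:ℝ)+i)+lam := by positivity
            have heq : ((m:ℝ)+i)/(((m:ℝ)+i)+lam) = 1 - lam/(((m:ℝ)+i)+lam) := by
              field_simp
              ring
            have hle := Real.add_one_le_exp (-(lam / (((m:ℝ)+i)+lam)))
            rw [heq]; linarith
      _ = exp (∑ i : Fin (k+1), -(lam / (((m:ℝ)+i)+lam))) := (Real.exp_sum _ _).symm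
      _ ≤ exp (-(lam * log R)) := by
          apply Real.exp_le_exp.mpr
          have hsum : ∑ i : Fin (k+1), -(lam / (((m:ℝ)+i)+lam))
              = -(lam * ∑ i ∈ Finset.range (k+1), 1/((m:ℝ)+i+lam)) := by
            rw [← Fin.sum_univ_eq_sum_range (fun j => 1/((m:ℝ)+j+lam)) (k+1),
              Finset.mul_sum, ← Finset.sum_neg_distrib]
            apply Finset.sum_congr rfl
            intro i _
            rw [mul_one_div]
          rw [hsum]
          have := mul_le_mul_of_nonneg_left hlogR hlam.le
          linarith
  calc (μ {ω | ∑ i, T i ω ≤ s}).toReal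
      ≤ exp (-(-lam) * s) * ∏ i : Fin (k+1), mgf (T i) μ (-lam) := hch
    _ ≤ exp (-(-lam) * s) * exp (-(lam * log R)) := by
        apply mul_le_mul_of_nonneg_left hprod (exp_pos _).le
    _ = exp (lam * (s - log R)) := by
        rw [← Real.exp_add]
        congr 1
        ring
end

section
/- Let θ : [0,∞) → ℝ and σ : [0,∞) → ℝ be continuous with θ(t) → θ_∞ > 0 and σ(t)^2 → σ_∞^2 as t → ∞. Then lim_{t→∞} [∫_0^t σ(u)^2 exp(2∫_0^u θ(v)dv) du] / exp(2∫_0^t θ(u)du) = σ_∞^2 / (2θ_∞). -/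
open Filter Real intervalIntegral

/-- L'Hôpital-type limit: if `θ(t) → θ∞ > 0` and `σ(t)² → σ∞²`, then
`(∫₀ᵗ σ(u)² e^{2∫₀ᵘ θ} du) / e^{2∫₀ᵗ θ} → σ∞²/(2θ∞)`. -/
theorem stmt_10 (θ σ : ℝ → ℝ) (θinf σinf : ℝ)
    (hθc : Continuous θ) (hσc : Continuous σ)
    (hθ : Tendsto θ atTop (nhds θinf)) (hθpos : 0 < θinf)
    (hσ : Tendsto (fun t => (σ t) ^ 2) atTop (nhds (σinf ^ 2))) :
    Tendsto (fun t =>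
        (∫ u in (0 : ℝ)..t, (σ u) ^ 2 * exp (2 * ∫ v in (0 : ℝ)..u, θ v))
          / exp (2 * ∫ u in (0 : ℝ)..t, θ u))
      atTop (nhds (σinf ^ 2 / (2 * θinf))) := by
  set L : ℝ := σinf ^ 2 / (2 * θinf) with hLdef
  set Θ : ℝ → ℝ := fun t => ∫ v in (0:ℝ)..t, θ v with hΘdef
  set G : ℝ → ℝ := fun t => exp (2 * Θ t) with hGdef
  set F : ℝ → ℝ := fun t => ∫ u in (0:ℝ)..t, (σ u) ^ 2 * G u with hFdef
  have hΘd : ∀ t, HasDerivAt Θ (θ t) t := fun t =>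
    intervalIntegral.integral_hasDerivAt_right (hθc.intervalIntegrable _ _)
      (hθc.stronglyMeasurableAtFilter _ _) hθc.continuousAt
  have hΘc : Continuous Θ := continuous_iff_continuousAt.2 fun t => (hΘd t).continuousAt
  have hGc : Continuous G := Real.continuous_exp.comp (continuous_const.mul hΘc)
  have hGpos : ∀ t, 0 < G t := fun t => exp_pos _
  have hGd : ∀ t, HasDerivAt G (2 * θ t * G t) t := by
    intro t
    have := ((hΘd t).const_mul 2).exp
    convert this using 1
    ring
  have hθGc : Continuous fun u => θ u * G u := hθc.mul hGc
  have hσGc : Continuous fun u => (σ u) ^ 2 * G u := (hσc.pow 2).mul hGc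
  -- FTC: ∫ θ G = G/2 - G/2
  have hFTC : ∀ a t : ℝ, (∫ u in a..t, θ u * G u) = G t / 2 - G a / 2 := by
    intro a t
    have hd : ∀ u ∈ Set.uIcc a t, HasDerivAt (fun s => G s / 2) (θ u * G u) u := by
      intro u _
      have := (hGd u).div_const 2
      rwa [show θ u * G u = 2 * θ u * G u / 2 by ring]
    exact intervalIntegral.integral_eq_sub_of_hasDerivAt hd (hθGc.intervalIntegrable _ _)
  have hFadd : ∀ a t : ℝ, F t - F a = ∫ u in a..t, (σ u) ^ 2 * G u := by
    intro a t
    have := intervalIntegral.integral_add_adjacent_intervals (μ := MeasureTheory.volume)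
      (hσGc.intervalIntegrable 0 a) (hσGc.intervalIntegrable a t)
    simp only [hFdef]
    linarith [this]
  -- eventually θ > θinf/2
  have h1 : ∀ᶠ u in atTop, θinf / 2 < θ u :=
    hθ.eventually (eventually_gt_nhds (by linarith))
  -- Θ tends to atTop
  obtain ⟨T, hT⟩ := eventually_atTop.1 h1
  have hΘadd : ∀ t : ℝ, Θ t - Θ T = ∫ u in T..t, θ u := by
    intro t
    have := intervalIntegral.integral_add_adjacent_intervals (μ := MeasureTheory.volume)
      (hθc.intervalIntegrable 0 T) (hθc.intervalIntegrable T t)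
    simp only [hΘdef]
    linarith [this]
  have hΘlow : ∀ t ≥ T, Θ T + θinf / 2 * (t - T) ≤ Θ t := by
    intro t ht
    have hmono : (∫ u in T..t, (fun _ => θinf / 2) u) ≤ ∫ u in T..t, θ u := by
      apply intervalIntegral.integral_mono_on (μ := MeasureTheory.volume) ht
        (continuous_const.intervalIntegrable _ _) (hθc.intervalIntegrable _ _)
      intro u hu
      exact le_of_lt (hT u hu.1)
    rw [intervalIntegral.integral_const] at hmono
    have := hΘadd t
    simp only [smul_eq_mul] at hmono
    nlinarith
  have hΘtop : Tendsto Θ atTop atTop := by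
    apply tendsto_atTop_mono' atTop (eventually_atTop.2 ⟨T, hΘlow⟩)
    apply tendsto_atTop_add_const_left
    apply Tendsto.const_mul_atTop (by linarith : (0:ℝ) < θinf / 2)
    exact tendsto_atTop_add_const_right _ (-T) tendsto_id
  have hGtop : Tendsto G atTop atTop :=
    Real.tendsto_exp_atTop.comp (hΘtop.const_mul_atTop two_pos)
  -- main
  rw [Metric.tendsto_nhds]
  intro ε hε
  have h2 : Tendsto (fun u => (σ u) ^ 2 - 2 * L * θ u) atTop (nhds 0) := by
    have := hσ.sub (hθ.const_mul (2 * L))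
    have heq : σinf ^ 2 - 2 * L * θinf = 0 := by
      rw [hLdef]; field_simp; ring
    rwa [heq] at this
  have h2' : ∀ᶠ u in atTop, |(σ u) ^ 2 - 2 * L * θ u| < ε / 2 * (θinf / 2) := by
    have := Metric.tendsto_nhds.1 h2 (ε / 2 * (θinf / 2)) (by positivity)
    simpa [Real.dist_eq] using this
  obtain ⟨T₀, hT₀⟩ := eventually_atTop.1 (h1.and h2')
  set C : ℝ := F T₀ - L * G T₀ with hCdef
  have key : ∀ t ≥ T₀, |(F t - L * G t) - C| ≤ ε / 4 * G t := by
    intro t ht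
    have hint : F t - L * G t - C = ∫ u in T₀..t, ((σ u) ^ 2 - 2 * L * θ u) * G u := by
      have e1 : (∫ u in T₀..t, ((σ u) ^ 2 - 2 * L * θ u) * G u)
          = (∫ u in T₀..t, (σ u) ^ 2 * G u) - 2 * L * ∫ u in T₀..t, θ u * G u := by
        rw [← intervalIntegral.integral_const_mul, ← intervalIntegral.integral_sub
          (hσGc.intervalIntegrable _ _) (show IntervalIntegrable (fun u => 2 * L * (θ u * G u)) MeasureTheory.volume T₀ t from
            (continuous_const.mul hθGc).intervalIntegrable _ _)]
        congr 1; ext u; ring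
      rw [e1, ← hFadd T₀ t, hFTC T₀ t]
      ring
    rw [hint]
    calc |∫ u in T₀..t, ((σ u) ^ 2 - 2 * L * θ u) * G u|
        ≤ ∫ u in T₀..t, |((σ u) ^ 2 - 2 * L * θ u) * G u| :=
          intervalIntegral.abs_integral_le_integral_abs ht
      _ ≤ ∫ u in T₀..t, ε / 2 * (θ u * G u) := by
          apply intervalIntegral.integral_mono_on ht
            ((((hσc.pow 2).sub (continuous_const.mul hθc)).mul hGc).abs.intervalIntegrable _ _)
            ((continuous_const.mul hθGc).intervalIntegrable _ _)
          intro u hu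
          show |((σ u) ^ 2 - 2 * L * θ u) * G u| ≤ ε / 2 * (θ u * G u)
          rw [abs_mul, abs_of_pos (hGpos u)]
          have : |(σ u) ^ 2 - 2 * L * θ u| ≤ ε / 2 * θ u := by
            have := (hT₀ u hu.1).1
            nlinarith [(hT₀ u hu.1).2]
          nlinarith [(hGpos u).le, abs_nonneg ((σ u) ^ 2 - 2 * L * θ u)]
      _ = ε / 2 * (G t / 2 - G T₀ / 2) := by
          rw [intervalIntegral.integral_const_mul, hFTC]
      _ ≤ ε / 4 * G t := by nlinarith [hGpos T₀, hε]
  filter_upwards [eventually_ge_atTop T₀, hGtop.eventually_ge_atTop (4 * (|C| + 1) / ε)]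
    with t ht hGt
  have hGtpos := hGpos t
  have h4 : 4 * (|C| + 1) ≤ G t * ε := by
    rw [div_le_iff₀ hε] at hGt
    linarith
  have hest := key t ht
  have htri : |F t - L * G t| ≤ |C| + ε / 4 * G t := by
    calc |F t - L * G t| = |((F t - L * G t) - C) + C| := by congr 1; ring
      _ ≤ |(F t - L * G t) - C| + |C| := abs_add_le _ _
      _ ≤ |C| + ε / 4 * G t := by linarith
  rw [Real.dist_eq]
  have hdiv : F t / G t - L = (F t - L * G t) / G t := by field_simp
  rw [hdiv, abs_div, abs_of_pos hGtpos, div_lt_iff₀ hGtpos]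
  nlinarith [abs_nonneg C]
end
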